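/- (Graph decomposition lemma) Let v_1, …, v_n be any ordering of V, and let Q be a k-defective clique with |Q| ≥ k+2. Let v_i be the vertex of Q with smallest index. Then Q ⊆ {v_i} ∪ N^+(v_i) ∪ N^{2+}(v_i), where N^+(v_i) = N(v_i) ∩ {v_{i+1}, …, v_n} and N^{2+}(v_i) = (⋃_{w∈N^+(v_i)} N(w)) ∩ {v_{i+1}, …, v_n} \ N^+(v_i). -/

import Mathlib

open Finset

variable {V : Type*} [Fintype V] [DecidableEq V]

/-- The set of non-edges (missing edges) of the subgraph of `G` induced by `S`,
as a finset of unordered pairs. -/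
def nonEdges (G : SimpleGraph V) [DecidableRel G.Adj] (S : Finset V) : Finset (Sym2 V) :=
  ((S ×ˢ S).filter fun p => p.1 ≠ p.2 ∧ ¬ G.Adj p.1 p.2).image fun p => s(p.1, p.2)

/-- `S` is a `k`-defective clique: the complement of `G[S]` has at most `k` edges. -/
def IsDefClique (G : SimpleGraph V) [DecidableRel G.Adj] (k : ℕ) (S : Finset V) : Prop :=
  (nonEdges G S).card ≤ k

/-- `D` is a `k`-defective set: it is a `k`-defective clique in which every vertex
is non-adjacent to at least one other vertex of `D`. -/
def IsDefSet (G : SimpleGraph V) [DecidableRel G.Adj] (k : ℕ) (D : Finset V) : Prop :=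
  (∀ u ∈ D, ∃ v ∈ D, v ≠ u ∧ ¬ G.Adj u v) ∧ IsDefClique G k D

lemma mem_nonEdges {G : SimpleGraph V} [DecidableRel G.Adj] {S : Finset V} {a b : V}
    (ha : a ∈ S) (hb : b ∈ S) (hab : a ≠ b) (hadj : ¬ G.Adj a b) :
    s(a, b) ∈ nonEdges G S := by
  simp only [nonEdges, Finset.mem_image, Finset.mem_filter, Finset.mem_product]
  exact ⟨(a, b), ⟨⟨ha, hb⟩, hab, hadj⟩, rfl⟩

/-- Graph decomposition lemma: for any ordering of `V` (given by an injective index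
function `idx`), if `Q` is a `k`-defective clique with `|Q| ≥ k+2` and `vi` is its
vertex of smallest index, then `Q ⊆ {vi} ∪ N⁺(vi) ∪ N²⁺(vi)`. -/
theorem graph_decomposition (G : SimpleGraph V) [DecidableRel G.Adj] (k : ℕ)
    (idx : V → ℕ) (hinj : Function.Injective idx)
    (Q : Finset V) (hQ : IsDefClique G k Q) (hcard : k + 2 ≤ Q.card)
    (vi : V) (hvi : vi ∈ Q) (hmin : ∀ u ∈ Q, idx vi ≤ idx u) :
    Q ⊆ insert vi
      ((Finset.univ.filter fun u => G.Adj vi u ∧ idx vi < idx u) ∪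
        (Finset.univ.filter fun u => idx vi < idx u ∧ ¬ G.Adj vi u ∧
          ∃ w, (G.Adj vi w ∧ idx vi < idx w) ∧ G.Adj w u)) := by
  intro u hu
  by_cases huv : u = vi
  · simp [huv]
  have hlt : idx vi < idx u :=
    lt_of_le_of_ne (hmin u hu) (fun h => huv (hinj h.symm))
  by_cases hadj : G.Adj vi u
  · simp [Finset.mem_insert, Finset.mem_union, Finset.mem_filter, hadj, hlt]
  -- need a common neighbor
  have hw : ∃ w ∈ Q, G.Adj vi w ∧ G.Adj w u := by
    by_contra hno
    push_neg at hno
    set f : V → Sym2 V := fun z => if G.Adj vi z then s(u, z) else s(vi, z) with hf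
    set T : Finset (Sym2 V) := insert s(vi, u) ((Q \ {vi, u}).image f) with hT
    have hzne : ∀ z ∈ Q \ ({vi, u} : Finset V), z ≠ vi ∧ z ≠ u := by
      intro z hz
      simp only [Finset.mem_sdiff, Finset.mem_insert, Finset.mem_singleton] at hz
      exact ⟨fun h => hz.2 (Or.inl h), fun h => hz.2 (Or.inr h)⟩
    have hsub : T ⊆ nonEdges G Q := by
      intro e he
      rw [hT, Finset.mem_insert] at he
      rcases he with rfl | he
      · exact mem_nonEdges hvi hu (fun h => huv h.symm) hadj
      · obtain ⟨z, hz, rfl⟩ := Finset.mem_image.mp he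
        obtain ⟨hzvi, hzu⟩ := hzne z hz
        have hzQ : z ∈ Q := (Finset.mem_sdiff.mp hz).1
        by_cases h1 : G.Adj vi z
        · have h2 : ¬ G.Adj z u := fun h => hno z hzQ h1 h
          have : f z = s(u, z) := if_pos h1
          rw [this]
          exact mem_nonEdges hu hzQ (fun h => hzu h.symm)
            (fun h => h2 h.symm)
        · have : f z = s(vi, z) := if_neg h1
          rw [this]
          exact mem_nonEdges hvi hzQ (fun h => hzvi h.symm) h1
    have hnotin : s(vi, u) ∉ (Q \ {vi, u}).image f := by
      intro h
      obtain ⟨z, hz, hfz⟩ := Finset.mem_image.mp h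
      obtain ⟨hzvi, hzu⟩ := hzne z hz
      simp only [hf] at hfz
      by_cases h1 : G.Adj vi z
      · rw [if_pos h1, Sym2.eq_iff] at hfz
        rcases hfz with ⟨h2, h3⟩ | ⟨h2, h3⟩
        · exact huv h2
        · exact hzvi h3
      · rw [if_neg h1, Sym2.eq_iff] at hfz
        rcases hfz with ⟨h2, h3⟩ | ⟨h2, h3⟩
        · exact hzu h3
        · exact hzvi h3
    have hinjf : Set.InjOn f (Q \ {vi, u} : Finset V) := by
      intro z hz z' hz' hfz
      obtain ⟨hzvi, hzu⟩ := hzne z hz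
      obtain ⟨hzvi', hzu'⟩ := hzne z' hz'
      by_cases h1 : G.Adj vi z <;> by_cases h2 : G.Adj vi z' <;>
        simp only [hf, if_pos, if_neg, h1, h2, if_true, if_false, Sym2.eq_iff] at hfz
      · rcases hfz with ⟨_, h⟩ | ⟨h, h'⟩
        · exact h
        · exact absurd h' hzu
      · rcases hfz with ⟨h, _⟩ | ⟨h, h'⟩
        · exact absurd h huv
        · exact absurd h' hzvi
      · rcases hfz with ⟨h, _⟩ | ⟨h, h'⟩
        · exact absurd h.symm huv
        · exact absurd h' hzu
      · rcases hfz with ⟨_, h⟩ | ⟨h, h'⟩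
        · exact h
        · exact absurd h' hzvi
    have hcard2 : k ≤ (Q \ ({vi, u} : Finset V)).card := by
      have : ({vi, u} : Finset V).card ≤ 2 := Finset.card_insert_le _ _ |>.trans (by simp)
      have h3 := Finset.card_sdiff_add_card_eq_card
        (Finset.insert_subset hvi (Finset.singleton_subset_iff.mpr hu))
      omega
    have hTcard : k + 1 ≤ T.card := by
      rw [hT, Finset.card_insert_of_notMem hnotin, Finset.card_image_of_injOn hinjf]
      omega
    have := Finset.card_le_card hsub
    unfold IsDefClique at hQ
    omega
  obtain ⟨w, hwQ, hw1, hw2⟩ := hw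
  have hwvi : w ≠ vi := fun h => G.loopless.irrefl vi (h ▸ hw1)
  have hwlt : idx vi < idx w :=
    lt_of_le_of_ne (hmin w hwQ) (fun h => hwvi (hinj h.symm))
  simp only [Finset.mem_insert, Finset.mem_union, Finset.mem_filter, Finset.mem_univ, true_and]
  exact Or.inr (Or.inr ⟨hlt, hadj, w, ⟨hw1, hwlt⟩, hw2⟩)
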